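/- Weighted weak (1,1) Fefferman–Stein inequality: there is a constant C > 0 depending only on the dimension n such that for every weight w on ℝ^n, every locally integrable f, and every t > 0, t · w({x ∈ ℝ^n : M_Q f(x) > t}) ≤ C ∫_{ℝ^n} |f(x)| M_Q w(x) dx. -/

import Mathlib

open MeasureTheory Set
open scoped ENNReal

noncomputable section

/-- A cube in `ℝⁿ` with sides parallel to the axes. -/
def IsCube (n : ℕ) (Q : Set (Fin n → ℝ)) : Prop :=
  ∃ (a : Fin n → ℝ) (r : ℝ), 0 < r ∧ Q = Set.univ.pi fun i => Set.Ioo (a i) (a i + r)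

/-- The Hardy–Littlewood maximal operator over cubes in `ℝⁿ`. -/
def MHL {n : ℕ} (f : (Fin n → ℝ) → ℝ) (x : Fin n → ℝ) : ℝ≥0∞ :=
  ⨆ (Q : Set (Fin n → ℝ)) (_ : IsCube n Q ∧ x ∈ Q),
    (∫⁻ y in Q, ENNReal.ofReal |f y|) / volume Q

open Metric

/-- In the sup metric on `ℝⁿ`, every open ball is a cube. -/
lemma isCube_ball {n : ℕ} (c : Fin n → ℝ) {ρ : ℝ} (hρ : 0 < ρ) :
    IsCube n (ball c ρ) := by
  refine ⟨fun i => c i - ρ, 2 * ρ, by linarith, ?_⟩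
  rw [ball_pi _ hρ]
  refine congrArg (Set.pi univ) ?_
  funext i
  rw [Real.ball_eq_Ioo]
  congr 1 <;> ring

/-- Every cube is an open ball in the sup metric. -/
lemma cube_eq_ball {n : ℕ} {Q : Set (Fin n → ℝ)} (h : IsCube n Q) :
    ∃ (c : Fin n → ℝ) (ρ : ℝ), 0 < ρ ∧ Q = ball c ρ := by
  obtain ⟨a, r, hr, rfl⟩ := h
  refine ⟨fun i => a i + r / 2, r / 2, by linarith, ?_⟩
  rw [ball_pi _ (by linarith : (0:ℝ) < r / 2)]
  refine congrArg (Set.pi univ) ?_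
  funext i
  rw [Real.ball_eq_Ioo]
  congr 1 <;> ring

lemma volume_ball_sup {n : ℕ} (c : Fin n → ℝ) {ρ : ℝ} (hρ : 0 < ρ) :
    volume (ball c ρ) = ENNReal.ofReal (2 * ρ) ^ n := by
  rw [ball_pi _ hρ]
  rw [volume_pi_pi]
  have : ∀ i : Fin n, volume (ball (c i) ρ) = ENNReal.ofReal (2 * ρ) := by
    intro i
    rw [Real.ball_eq_Ioo, Real.volume_Ioo]
    congr 1; ring
  simp [this, Finset.prod_const]

lemma volume_ball_sup_ne_zero {n : ℕ} (c : Fin n → ℝ) {ρ : ℝ} (hρ : 0 < ρ) :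
    volume (ball c ρ) ≠ 0 := by
  rw [volume_ball_sup c hρ]
  exact pow_ne_zero _ (by simp [ENNReal.ofReal_eq_zero]; linarith)

lemma volume_ball_sup_ne_top {n : ℕ} (c : Fin n → ℝ) {ρ : ℝ} (hρ : 0 < ρ) :
    volume (ball c ρ) ≠ ∞ := by
  rw [volume_ball_sup c hρ]
  exact ENNReal.pow_ne_top ENNReal.ofReal_ne_top

lemma le_MHL {n : ℕ} (f : (Fin n → ℝ) → ℝ) {Q : Set (Fin n → ℝ)} {x : Fin n → ℝ}
    (hQ : IsCube n Q) (hx : x ∈ Q) :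
    (∫⁻ y in Q, ENNReal.ofReal |f y|) / volume Q ≤ MHL f x :=
  le_iSup_of_le Q (le_iSup_of_le ⟨hQ, hx⟩ le_rfl)

/-- The weak (1,1) Fefferman–Stein inequality. -/
theorem fefferman_stein_weak (n : ℕ) :
    ∃ C : ℝ, 0 < C ∧
      ∀ (w f : (Fin n → ℝ) → ℝ), (∀ x, 0 ≤ w x) → LocallyIntegrable w volume →
        LocallyIntegrable f volume → ∀ t : ℝ, 0 < t →
          ENNReal.ofReal t *
              (∫⁻ x in {x | ENNReal.ofReal t < MHL f x}, ENNReal.ofReal (w x)) ≤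
            ENNReal.ofReal C * ∫⁻ x, ENNReal.ofReal |f x| * MHL w x := by
  refine ⟨5 ^ n, by positivity, ?_⟩
  intro w f hw hwl hfl t ht
  -- the weighted measure
  set μ' : Measure (Fin n → ℝ) := volume.withDensity (fun x => ENNReal.ofReal (w x)) with hμ'
  have hfm : AEMeasurable (fun y => ENNReal.ofReal |f y|) volume := by
    have := hfl.aestronglyMeasurable.norm.aemeasurable.ennreal_ofReal
    simpa [Real.norm_eq_abs] using this
  -- truncated superlevel sets
  set E : ℕ → Set (Fin n → ℝ) := fun k =>
    {x | ∃ (c : Fin n → ℝ) (ρ : ℝ), 0 < ρ ∧ ρ ≤ (k : ℝ) ∧ x ∈ ball c ρ ∧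
      ENNReal.ofReal t * volume (ball c ρ) < ∫⁻ y in ball c ρ, ENNReal.ofReal |f y|} with hE
  have hEopen : ∀ k, IsOpen (E k) := by
    intro k
    rw [isOpen_iff_mem_nhds]
    rintro x ⟨c, ρ, hρ, hρk, hx, hlt⟩
    exact Filter.mem_of_superset (isOpen_ball.mem_nhds hx)
      (fun y hy => ⟨c, ρ, hρ, hρk, hy, hlt⟩)
  have hEmono : Monotone E := by
    intro k l hkl x ⟨c, ρ, hρ, hρk, hx, hlt⟩
    exact ⟨c, ρ, hρ, hρk.trans (by exact_mod_cast hkl), hx, hlt⟩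
  have hsub : {x | ENNReal.ofReal t < MHL f x} ⊆ ⋃ k, E k := by
    intro x hx
    simp only [MHL, lt_iSup_iff] at hx
    obtain ⟨Q, ⟨hQ, hxQ⟩, hlt⟩ := hx
    obtain ⟨c, ρ, hρ, rfl⟩ := cube_eq_ball hQ
    have hmul : ENNReal.ofReal t * volume (ball c ρ) < ∫⁻ y in ball c ρ, ENNReal.ofReal |f y| :=
      (ENNReal.lt_div_iff_mul_lt (Or.inl (volume_ball_sup_ne_zero c hρ))
        (Or.inl (volume_ball_sup_ne_top c hρ))).1 hlt
    exact mem_iUnion.2 ⟨⌈ρ⌉₊, c, ρ, hρ, Nat.le_ceil ρ, hxQ, hmul⟩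
  -- reduce to a bound for each `E k`
  have key : ∀ k, ENNReal.ofReal t * μ' (E k) ≤
      ENNReal.ofReal ((5:ℝ) ^ n) * ∫⁻ x, ENNReal.ofReal |f x| * MHL w x := by
    intro k
    -- choose cubes
    choose! c ρ hρ hρk hmem hlt using fun a (ha : a ∈ E k) => ha
    -- Vitali covering lemma
    obtain ⟨u, hu, hdisj, hcov⟩ :=
      Vitali.exists_disjoint_subfamily_covering_enlargement_closedBall (E k) c ρ k
        (fun a ha => hρk a ha) 4 (by norm_num)
    have hucnt : u.Countable := by
      apply hdisj.countable_of_nonempty_interior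
      intro a ha
      exact ⟨a, ball_subset_interior_closedBall (hmem a (hu ha))⟩
    haveI : Countable u := hucnt.to_subtype
    -- the covering by enlarged balls
    have hcover : E k ⊆ ⋃ b : u, ball (c b) (5 * ρ b) := by
      intro a ha
      obtain ⟨b, hb, hsub⟩ := hcov a ha
      refine mem_iUnion.2 ⟨⟨b, hb⟩, ?_⟩
      have hρb : 0 < ρ b := hρ b (hu hb)
      exact (closedBall_subset_ball (by linarith)) (hsub (ball_subset_closedBall (hmem a ha)))
    -- key estimate for a single enlarged ball
    have hball : ∀ b ∈ u, ENNReal.ofReal t * μ' (ball (c b) (5 * ρ b)) ≤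
        ENNReal.ofReal ((5:ℝ) ^ n) * ∫⁻ y in ball (c b) (ρ b),
          ENNReal.ofReal |f y| * MHL w y := by
      intro b hb
      have hρb : 0 < ρ b := hρ b (hu hb)
      have h5ρ : (0:ℝ) < 5 * ρ b := by linarith
      set Q := ball (c b) (ρ b) with hQdef
      set Q' := ball (c b) (5 * ρ b) with hQ'def
      have hQQ' : Q ⊆ Q' := ball_subset_ball (by linarith)
      set A := μ' Q' with hA
      set V' := volume Q' with hV'
      have hAeq : A = ∫⁻ y in Q', ENNReal.ofReal (w y) := by
        rw [hA, hμ', withDensity_apply _ isOpen_ball.measurableSet]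
      have hV'ne0 : V' ≠ 0 := volume_ball_sup_ne_zero _ h5ρ
      have hV'netop : V' ≠ ∞ := volume_ball_sup_ne_top _ h5ρ
      -- `A / V' ≤ MHL w y` for `y ∈ Q`
      have hMw : ∀ y ∈ Q, A / V' ≤ MHL w y := by
        intro y hy
        have h1 : (∫⁻ z in Q', ENNReal.ofReal |w z|) / volume Q' ≤ MHL w y :=
          le_MHL w (isCube_ball _ h5ρ) (hQQ' hy)
        have h2 : (∫⁻ z in Q', ENNReal.ofReal |w z|) = A := by
          rw [hAeq]
          exact lintegral_congr fun z => by rw [abs_of_nonneg (hw z)]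
        rwa [h2] at h1
      -- volume comparison
      have hV'vol : V' = ENNReal.ofReal ((5:ℝ) ^ n) * volume Q := by
        rw [hV', hQdef, volume_ball_sup _ h5ρ, volume_ball_sup _ hρb,
          ENNReal.ofReal_pow (by norm_num : (0:ℝ) ≤ 5), ← mul_pow,
          ← ENNReal.ofReal_mul (by norm_num : (0:ℝ) ≤ 5)]
        congr 2; ring
      have hAV : A = A / V' * V' := (ENNReal.div_mul_cancel hV'ne0 hV'netop).symm
      calc ENNReal.ofReal t * A = ENNReal.ofReal t * (A / V' * V') := by rw [← hAV]
        _ = ENNReal.ofReal ((5:ℝ) ^ n) * ((ENNReal.ofReal t * volume Q) * (A / V')) := by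
            rw [hV'vol]; ring
        _ ≤ ENNReal.ofReal ((5:ℝ) ^ n) * ((∫⁻ y in Q, ENNReal.ofReal |f y|) * (A / V')) := by
            gcongr
            exact (hlt b (hu hb)).le
        _ = ENNReal.ofReal ((5:ℝ) ^ n) * ∫⁻ y in Q, ENNReal.ofReal |f y| * (A / V') := by
            rw [lintegral_mul_const'' _ hfm.restrict]
        _ ≤ ENNReal.ofReal ((5:ℝ) ^ n) * ∫⁻ y in Q, ENNReal.ofReal |f y| * MHL w y :=
            mul_le_mul_right (setLIntegral_mono' isOpen_ball.measurableSet
              (fun y hy => mul_le_mul_right (hMw y hy) _)) _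
    -- small balls are pairwise disjoint
    have hdisj' : Pairwise (Function.onFun Disjoint fun b : u => ball (c b) (ρ b)) := by
      intro b₁ b₂ hne
      exact Disjoint.mono ball_subset_closedBall ball_subset_closedBall
        (hdisj b₁.2 b₂.2 (Subtype.coe_injective.ne hne))
    calc ENNReal.ofReal t * μ' (E k)
        ≤ ENNReal.ofReal t * ∑' b : u, μ' (ball (c b) (5 * ρ b)) := by
          gcongr
          exact (measure_mono hcover).trans (measure_iUnion_le _)
      _ = ∑' b : u, ENNReal.ofReal t * μ' (ball (c b) (5 * ρ b)) := ENNReal.tsum_mul_left.symm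
      _ ≤ ∑' b : u, ENNReal.ofReal ((5:ℝ) ^ n) *
            ∫⁻ y in ball (c b) (ρ b), ENNReal.ofReal |f y| * MHL w y := by
          exact ENNReal.tsum_le_tsum fun b => hball b b.2
      _ = ENNReal.ofReal ((5:ℝ) ^ n) *
            ∑' b : u, ∫⁻ y in ball (c b) (ρ b), ENNReal.ofReal |f y| * MHL w y :=
          ENNReal.tsum_mul_left
      _ = ENNReal.ofReal ((5:ℝ) ^ n) *
            ∫⁻ y in ⋃ b : u, ball (c b) (ρ b), ENNReal.ofReal |f y| * MHL w y := by
          rw [lintegral_iUnion (fun b => isOpen_ball.measurableSet) hdisj']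
      _ ≤ ENNReal.ofReal ((5:ℝ) ^ n) * ∫⁻ x, ENNReal.ofReal |f x| * MHL w x := by
          gcongr
          exact Measure.restrict_le_self
  -- put everything together
  have h1 : (∫⁻ x in {x | ENNReal.ofReal t < MHL f x}, ENNReal.ofReal (w x)) ≤ μ' (⋃ k, E k) := by
    rw [hμ', withDensity_apply _ (isOpen_iUnion hEopen).measurableSet]
    exact lintegral_mono_set hsub
  have h2 : μ' (⋃ k, E k) = ⨆ k, μ' (E k) := Directed.measure_iUnion hEmono.directed_le
  calc ENNReal.ofReal t * (∫⁻ x in {x | ENNReal.ofReal t < MHL f x}, ENNReal.ofReal (w x))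
      ≤ ENNReal.ofReal t * μ' (⋃ k, E k) := by gcongr
    _ = ⨆ k, ENNReal.ofReal t * μ' (E k) := by rw [h2, ENNReal.mul_iSup]
    _ ≤ ENNReal.ofReal ((5:ℝ) ^ n) * ∫⁻ x, ENNReal.ofReal |f x| * MHL w x :=
        iSup_le fun k => key k
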